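/- (FSOL regret bound) Let (x_t, y_t), t = 1,…,T be examples with x_t ∈ R^d, y_t ∈ {−1, +1}, ‖x_t‖₁ ≤ X (and hence ‖x_t‖₂ ≤ X). Run FSOL: θ_1 = 0; w_t = soft-threshold of θ_t at level ηλ; suffer hinge loss ℓ_t(w) = max(0, 1 − y_t w^⊤ x_t); θ_{t+1} = θ_t + η L_t y_t x_t, where L_t = 1 if ℓ_t(w_t) > 0 and 0 otherwise. Then for any w ∈ R^d, ∑_{t=1}^T ℓ_t(w_t) − ∑_{t=1}^T ℓ_t(w) ≤ ‖w‖₂²/(2η) + (η/2) T X² + η λ T X. -/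
import Mathlib


open Finset

/-- Dot product on `ℝ^d`. -/
noncomputable def dot {d : ℕ} (u v : Fin d → ℝ) : ℝ := ∑ i, u i * v i

lemma soft_thresh_close (c t : ℝ) (hc : 0 ≤ c) :
    |t - Real.sign t * max (|t| - c) 0| ≤ c := by
  rcases lt_trichotomy t 0 with h | h | h
  · rw [Real.sign_of_neg h, abs_of_neg h]
    rcases le_or_gt (-t - c) 0 with h' | h'
    · rw [max_eq_right h', mul_zero, sub_zero, abs_of_neg h]; linarith
    · rw [max_eq_left h'.le, abs_le]; constructor <;> nlinarith
  · simp [h, hc]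
  · rw [Real.sign_of_pos h, abs_of_pos h, one_mul]
    rcases le_or_gt (t - c) 0 with h' | h'
    · rw [max_eq_right h', sub_zero, abs_of_pos h]; linarith
    · rw [max_eq_left h'.le, abs_le]; constructor <;> linarith

lemma telescope_Icc (f : ℕ → ℝ) (T : ℕ) :
    ∑ t ∈ Finset.Icc 1 T, (f t - f (t + 1)) = f 1 - f (T + 1) := by
  induction T with
  | zero => simp
  | succ n ih => rw [Finset.sum_Icc_succ_top (by omega), ih]; ring

/-- FSOL regret bound:
`∑ ℓ_t(w_t) - ∑ ℓ_t(w) ≤ ‖w‖₂²/(2η) + (η/2) T X² + ηλ T X`. -/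
theorem fsol_regret {d : ℕ} (T : ℕ) (X η lam : ℝ) (hη : 0 < η) (hlam : 0 ≤ lam)
    (x : ℕ → Fin d → ℝ) (y : ℕ → ℝ)
    (hy : ∀ t ∈ Finset.Icc 1 T, y t = 1 ∨ y t = -1)
    (hX : ∀ t ∈ Finset.Icc 1 T, ∑ i, |x t i| ≤ X)
    (θ w : ℕ → Fin d → ℝ) (L : ℕ → ℝ)
    (loss : ℕ → (Fin d → ℝ) → ℝ)
    (hloss : ∀ t v, loss t v = max 0 (1 - y t * dot v (x t)))
    (hθ1 : θ 1 = 0)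
    (hw : ∀ t ∈ Finset.Icc 1 T, ∀ i,
      w t i = Real.sign (θ t i) * max (|θ t i| - η * lam) 0)
    (hL : ∀ t, L t = if 0 < loss t (w t) then 1 else 0)
    (hθ : ∀ t ∈ Finset.Icc 1 T, θ (t + 1) = θ t + (η * L t * y t) • x t)
    (wv : Fin d → ℝ) :
    ∑ t ∈ Finset.Icc 1 T, loss t (w t) - ∑ t ∈ Finset.Icc 1 T, loss t wv ≤
      (∑ i, (wv i) ^ 2) / (2 * η) + η / 2 * T * X ^ 2 + η * lam * T * X := by
  rcases Nat.eq_zero_or_pos T with hT | hT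
  · subst hT
    simp only [Nat.cast_zero, mul_zero, zero_mul, add_zero]
    simp only [show Finset.Icc 1 0 = (∅ : Finset ℕ) from rfl, Finset.sum_empty, sub_zero]
    positivity
  -- X is nonnegative
  have hXnn : 0 ≤ X := by
    exact le_trans (Finset.sum_nonneg fun i _ => abs_nonneg _)
      (hX 1 (Finset.mem_Icc.mpr ⟨le_refl 1, hT⟩))
  set Φ : ℕ → ℝ := fun t => ∑ i, (θ t i - wv i) ^ 2 with hΦ
  have key : ∀ t ∈ Finset.Icc 1 T, loss t (w t) - loss t wv ≤
      (Φ t - Φ (t + 1)) / (2 * η) + (η / 2 * X ^ 2 + η * lam * X) := by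
    intro t ht
    have hXt : ∑ i, |x t i| ≤ X := hX t ht
    have hexp : Φ (t + 1) = Φ t + 2 * (η * L t * y t) * (∑ i, x t i * (θ t i - wv i))
        + (η * L t * y t) ^ 2 * ∑ i, (x t i) ^ 2 := by
      simp only [hΦ]
      rw [hθ t ht, Finset.mul_sum, Finset.mul_sum, ← Finset.sum_add_distrib,
        ← Finset.sum_add_distrib]
      refine Finset.sum_congr rfl fun i _ => ?_
      simp only [Pi.add_apply, Pi.smul_apply, smul_eq_mul]
      ring
    have hlossnn : 0 ≤ loss t wv := by rw [hloss]; exact le_max_left _ _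
    by_cases hpos : 0 < loss t (w t)
    · -- L t = 1
      have hL1 : L t = 1 := by rw [hL]; simp [hpos]
      have hy1 : (y t) ^ 2 = 1 := by rcases hy t ht with h | h <;> rw [h] <;> norm_num
      have hyabs : |y t| = 1 := by rcases hy t ht with h | h <;> rw [h] <;> norm_num
      have h1 : loss t (w t) = 1 - y t * dot (w t) (x t) := by
        rw [hloss] at hpos ⊢
        rcases max_cases (0 : ℝ) (1 - y t * dot (w t) (x t)) with ⟨he, _⟩ | ⟨he, _⟩
        · rw [he] at hpos; exact absurd hpos (lt_irrefl 0)
        · exact he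
      have h2 : 1 - y t * dot wv (x t) ≤ loss t wv := by
        rw [hloss]; exact le_max_right _ _
      have hclam : 0 ≤ η * lam := by positivity
      have hthr : ∀ i, |θ t i - w t i| ≤ η * lam := by
        intro i; rw [hw t ht i]; exact soft_thresh_close _ _ hclam
      -- bound on ∑ x_i^2
      have hS2 : ∑ i, (x t i) ^ 2 ≤ X ^ 2 := by
        calc ∑ i, (x t i) ^ 2 = ∑ i, |x t i| ^ 2 := by
              exact Finset.sum_congr rfl fun i _ => (sq_abs _).symm
          _ ≤ (∑ i, |x t i|) ^ 2 :=
              Finset.sum_sq_le_sq_sum_of_nonneg fun i _ => abs_nonneg _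
          _ ≤ X ^ 2 := by
              apply pow_le_pow_left₀ (Finset.sum_nonneg fun i _ => abs_nonneg _) hXt
      -- bound on the threshold shift term
      have hD : y t * (∑ i, (θ t i - w t i) * x t i) ≤ η * lam * X := by
        calc y t * (∑ i, (θ t i - w t i) * x t i)
            ≤ |y t * (∑ i, (θ t i - w t i) * x t i)| := le_abs_self _
          _ = |∑ i, (θ t i - w t i) * x t i| := by rw [abs_mul, hyabs, one_mul]
          _ ≤ ∑ i, |(θ t i - w t i) * x t i| := Finset.abs_sum_le_sum_abs _ _
          _ ≤ ∑ i, (η * lam) * |x t i| := by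
              refine Finset.sum_le_sum fun i _ => ?_
              rw [abs_mul]
              exact mul_le_mul_of_nonneg_right (hthr i) (abs_nonneg _)
          _ = (η * lam) * ∑ i, |x t i| := by rw [Finset.mul_sum]
          _ ≤ η * lam * X := mul_le_mul_of_nonneg_left hXt hclam
      -- relation between the dot products
      have hrel : dot wv (x t) - dot (w t) (x t) =
          (∑ i, (θ t i - w t i) * x t i) - (∑ i, x t i * (θ t i - wv i)) := by
        simp only [dot, ← Finset.sum_sub_distrib]
        exact Finset.sum_congr rfl fun i _ => by ring
      set S1 := ∑ i, x t i * (θ t i - wv i) with hS1def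
      set S2 := ∑ i, (x t i) ^ 2 with hS2def
      set D := ∑ i, (θ t i - w t i) * x t i with hDdef
      have hdiv : (Φ t - Φ (t + 1)) / (2 * η) = -(y t * S1) - η / 2 * S2 := by
        have hnum : Φ t - Φ (t + 1) = (2 * η) * (-(y t * S1) - η / 2 * S2) := by
          rw [hexp, hL1]
          linear_combination (-(η ^ 2) * S2) * hy1
        rw [hnum, mul_div_cancel_left₀ _ (ne_of_gt (by positivity : (0:ℝ) < 2 * η))]
      rw [hdiv, h1]
      have hmul : 0 ≤ η / 2 * (X ^ 2 - S2) := by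
        apply mul_nonneg (by positivity) (by linarith)
      have hexpand : y t * (dot wv (x t) - dot (w t) (x t)) = y t * D - y t * S1 := by
        rw [hrel]; ring
      nlinarith [hD, h2, hmul]
    · -- L t = 0
      have hL0 : L t = 0 := by rw [hL]; simp [hpos]
      have hzero : loss t (w t) = 0 := by
        have : 0 ≤ loss t (w t) := by rw [hloss]; exact le_max_left _ _
        linarith [not_lt.mp hpos]
      have hΦeq : Φ (t + 1) = Φ t := by rw [hexp, hL0]; ring
      rw [hzero, hΦeq]
      have : 0 ≤ η / 2 * X ^ 2 + η * lam * X := by positivity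
      simp only [sub_self, zero_div, zero_add]
      linarith
  have hsum : ∑ t ∈ Finset.Icc 1 T, (loss t (w t) - loss t wv) ≤
      ∑ t ∈ Finset.Icc 1 T, ((Φ t - Φ (t + 1)) / (2 * η) + (η / 2 * X ^ 2 + η * lam * X)) :=
    Finset.sum_le_sum key
  rw [← Finset.sum_sub_distrib] at *
  calc ∑ t ∈ Finset.Icc 1 T, (loss t (w t) - loss t wv)
      ≤ ∑ t ∈ Finset.Icc 1 T, ((Φ t - Φ (t + 1)) / (2 * η) + (η / 2 * X ^ 2 + η * lam * X)) :=
        hsum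
    _ = (∑ t ∈ Finset.Icc 1 T, (Φ t - Φ (t + 1))) / (2 * η)
        + T * (η / 2 * X ^ 2 + η * lam * X) := by
        rw [Finset.sum_add_distrib, ← Finset.sum_div, Finset.sum_const, Nat.card_Icc,
          nsmul_eq_mul]
        simp
    _ = (Φ 1 - Φ (T + 1)) / (2 * η) + T * (η / 2 * X ^ 2 + η * lam * X) := by
        rw [telescope_Icc]
    _ ≤ Φ 1 / (2 * η) + T * (η / 2 * X ^ 2 + η * lam * X) := by
        have h1 : 0 ≤ Φ (T + 1) := Finset.sum_nonneg fun i _ => sq_nonneg _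
        have h2 : (Φ 1 - Φ (T + 1)) / (2 * η) ≤ Φ 1 / (2 * η) :=
          (div_le_div_iff_of_pos_right (by positivity)).mpr (by linarith)
        linarith
    _ = (∑ i, (wv i) ^ 2) / (2 * η) + η / 2 * T * X ^ 2 + η * lam * T * X := by
        have : Φ 1 = ∑ i, (wv i) ^ 2 := by
          simp only [hΦ, hθ1, Pi.zero_apply]
          exact Finset.sum_congr rfl fun i _ => by ring
        rw [this]; ring
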